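/- Let Γ_P, Γ_S > 0, ζ_P, ζ_S ∈ (0,1], C > 0, and define η(ω) = 4CΓ_P²Γ_S²ζ_Pζ_S / [(C+1)²Γ_P²Γ_S² + 4ω²(Γ_P² + Γ_S² - 2CΓ_PΓ_S) + 16ω⁴]. Then ∫_{-∞}^{∞} η(ω) dω = 2πCΓ_PΓ_Sζ_Pζ_S / [(C+1)(Γ_P+Γ_S)]. -/

import Mathlib

open Real MeasureTheory Set

-- positivity of denominator
lemma aux_Dpos {A σ : ℝ} (hA : 0 < A) (hσ : 0 < σ) (u : ℝ) :
    0 < (u ^ 2 - A) ^ 2 + σ ^ 2 * u ^ 2 := by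
  rcases eq_or_ne u 0 with h | h
  · subst h; nlinarith
  · have h1 : 0 < u ^ 2 := by positivity
    nlinarith [sq_nonneg (u ^ 2 - A), mul_pos (mul_pos hσ hσ) h1, sq_nonneg σ]

-- lorentzian integral
lemma aux_lorentz {σ : ℝ} (hσ : 0 < σ) :
    Integrable (fun t : ℝ => (t ^ 2 + σ ^ 2)⁻¹) ∧
    (∫ t : ℝ, (t ^ 2 + σ ^ 2)⁻¹) = π / σ := by
  have heq : (fun t : ℝ => (t ^ 2 + σ ^ 2)⁻¹)
      = fun t : ℝ => σ⁻¹ ^ 2 * (1 + (t / σ) ^ 2)⁻¹ := by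
    funext t
    have h1 : t ^ 2 + σ ^ 2 ≠ 0 := by positivity
    field_simp
    ring
  constructor
  · rw [heq]
    exact (integrable_inv_one_add_sq.comp_div hσ.ne').const_mul _
  · rw [heq]
    rw [integral_const_mul]
    rw [MeasureTheory.Measure.integral_comp_div (fun t : ℝ => (1 + t ^ 2)⁻¹) σ]
    rw [integral_univ_inv_one_add_sq]
    simp [abs_of_pos hσ]
    field_simp

open Set



lemma aux_deriv_div {A u : ℝ} (hu : u ≠ 0) :
    HasDerivAt (fun x : ℝ => A / x) (-(A / u ^ 2)) u := by
  have h := (hasDerivAt_inv hu).const_mul A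
  simpa [div_eq_mul_inv, mul_comm, neg_mul, mul_neg] using h

lemma aux_fim {A : ℝ} (hA : 0 < A) : (fun u : ℝ => u - A / u) '' Ioi 0 = univ := by
  refine eq_univ_of_forall fun t => ?_
  have hs0 : (0:ℝ) ≤ t ^ 2 + 4 * A := by positivity
  set s := Real.sqrt (t ^ 2 + 4 * A) with hsdef
  have hs2 : s ^ 2 = t ^ 2 + 4 * A := Real.sq_sqrt hs0
  have hsn : 0 ≤ s := Real.sqrt_nonneg _
  have hst : |t| < s := by
    nlinarith [sq_abs t, abs_nonneg t]
  have hu : 0 < (t + s) / 2 := by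
    have : -|t| ≤ t := neg_abs_le t
    linarith
  refine ⟨(t + s) / 2, hu, ?_⟩
  have hne : t + s ≠ 0 := by
    intro h0
    rw [h0] at hu
    simp at hu
  show (t + s) / 2 - A / ((t + s) / 2) = t
  field_simp
  linear_combination hs2

lemma aux_finj {A : ℝ} (hA : 0 < A) : InjOn (fun u : ℝ => u - A / u) (Ioi 0) := by
  intro u hu v hv h
  have hu0 : (0:ℝ) < u := hu
  have hv0 : (0:ℝ) < v := hv
  simp only at h
  field_simp at h
  have h' : (u - v) * (u * v + A) = 0 := by linear_combination h
  rcases mul_eq_zero.mp h' with h1 | h1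
  · linarith [sub_eq_zero.mp h1]
  · nlinarith

lemma aux_f2im {A : ℝ} (hA : 0 < A) : (fun u : ℝ => A / u) '' Ioi 0 = Ioi (0:ℝ) := by
  ext t
  constructor
  · rintro ⟨u, hu, rfl⟩
    have : (0:ℝ) < u := hu
    exact mem_Ioi.mpr (by positivity)
  · intro ht
    have ht0 : (0:ℝ) < t := ht
    refine ⟨A / t, mem_Ioi.mpr (by positivity), ?_⟩
    show A / (A / t) = t
    field_simp
    
lemma aux_f2inj {A : ℝ} (hA : 0 < A) : InjOn (fun u : ℝ => A / u) (Ioi 0) := by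
  intro u hu v hv h
  have hu0 : (0:ℝ) < u := hu
  have hv0 : (0:ℝ) < v := hv
  simp only at h
  field_simp at h
  exact h.symm

lemma aux_key {A σ : ℝ} (hA : 0 < A) (hσ : 0 < σ) :
    (∫ u : ℝ, ((u ^ 2 - A) ^ 2 + σ ^ 2 * u ^ 2)⁻¹) = π / (σ * A) := by
  set D : ℝ → ℝ := fun u => (u ^ 2 - A) ^ 2 + σ ^ 2 * u ^ 2 with hD
  have hDpos : ∀ u, 0 < D u := fun u => aux_Dpos hA hσ u
  obtain ⟨hg_int, hg_val⟩ := aux_lorentz (σ := σ) hσ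
  -- derivatives
  have hfd : ∀ u ∈ Ioi (0:ℝ),
      HasDerivWithinAt (fun u : ℝ => u - A / u) (1 + A / u ^ 2) (Ioi 0) u := by
    intro u hu
    have hu0 : u ≠ 0 := ne_of_gt (mem_Ioi.mp hu)
    have h := (hasDerivAt_id' u).sub (aux_deriv_div (A := A) hu0)
    simpa only [sub_neg_eq_add, Pi.sub_def] using h.hasDerivWithinAt
  have hf2d : ∀ u ∈ Ioi (0:ℝ),
      HasDerivWithinAt (fun u : ℝ => A / u) (-(A / u ^ 2)) (Ioi 0) u := by
    intro u hu
    exact (aux_deriv_div (ne_of_gt (mem_Ioi.mp hu))).hasDerivWithinAt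
  -- equality of integrands on Ioi 0 (substitution b)
  have hcongr : ∀ u ∈ Ioi (0:ℝ),
      |1 + A / u ^ 2| • ((u - A / u) ^ 2 + σ ^ 2)⁻¹ = (u ^ 2 + A) * (D u)⁻¹ := by
    intro u hu
    have hu0 : (0:ℝ) < u := mem_Ioi.mp hu
    have hune : u ≠ 0 := ne_of_gt hu0
    have habs : |1 + A / u ^ 2| = 1 + A / u ^ 2 := abs_of_pos (by positivity)
    have hDu : D u ≠ 0 := (hDpos u).ne'
    have h2 : (u - A / u) ^ 2 + σ ^ 2 = D u / u ^ 2 := by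
      rw [hD]; field_simp
    rw [habs, smul_eq_mul, h2]
    field_simp
  -- substitution b : value
  have hb := integral_image_eq_integral_abs_deriv_smul measurableSet_Ioi hfd (aux_finj hA)
      (fun t => (t ^ 2 + σ ^ 2)⁻¹)
  rw [aux_fim hA, setIntegral_univ, hg_val] at hb
  have hbval : (∫ u in Ioi (0:ℝ), (u ^ 2 + A) * (D u)⁻¹) = π / σ := by
    rw [hb]
    exact setIntegral_congr_fun measurableSet_Ioi fun u hu => (hcongr u hu).symm
  -- substitution b : integrability
  have hbint : IntegrableOn (fun u => (u ^ 2 + A) * (D u)⁻¹) (Ioi 0) := by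
    have h := (integrableOn_image_iff_integrableOn_abs_deriv_smul measurableSet_Ioi hfd
        (aux_finj hA) (fun t => (t ^ 2 + σ ^ 2)⁻¹)).mp
      (by rw [aux_fim hA, integrableOn_univ]; exact hg_int)
    exact h.congr_fun hcongr measurableSet_Ioi
  -- integrability of D⁻¹ and u²·D⁻¹ on Ioi 0
  have hmeas : AEStronglyMeasurable (fun u : ℝ => (D u)⁻¹)
      (volume.restrict (Ioi (0:ℝ))) := by
    apply Continuous.aestronglyMeasurable
    exact (continuous_pow 2 |>.sub continuous_const |>.pow 2 |>.add
      (continuous_const.mul (continuous_pow 2))).inv₀ fun u => (hDpos u).ne'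
  have hint1 : IntegrableOn (fun u => (D u)⁻¹) (Ioi 0) := by
    refine (hbint.const_mul A⁻¹).mono hmeas ?_
    filter_upwards with u
    have h1 : 0 < D u := hDpos u
    rw [Real.norm_eq_abs, Real.norm_eq_abs, abs_of_pos (by positivity),
      abs_of_pos (by positivity)]
    rw [← mul_assoc]
    have h2 : (1:ℝ) ≤ A⁻¹ * (u ^ 2 + A) := by
      rw [← inv_mul_cancel₀ (ne_of_gt hA)]
      gcongr
      nlinarith [sq_nonneg u]
    nlinarith [inv_pos.mpr h1]
  have hint2 : IntegrableOn (fun u => u ^ 2 * (D u)⁻¹) (Ioi 0) := by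
    have h := hbint.sub (hint1.const_mul A)
    exact MeasureTheory.IntegrableOn.congr_fun h
      (fun u _ => by simp only [Pi.sub_apply]; ring) measurableSet_Ioi
  -- substitution a : A * I = ∫ u² D⁻¹
  have ha := integral_image_eq_integral_abs_deriv_smul measurableSet_Ioi hf2d (aux_f2inj hA)
      (fun x => (D x)⁻¹)
  rw [aux_f2im hA] at ha
  have hacongr : ∀ u ∈ Ioi (0:ℝ),
      |-(A / u ^ 2)| • (D (A / u))⁻¹ = A⁻¹ * (u ^ 2 * (D u)⁻¹) := by
    intro u hu
    have hu0 : (0:ℝ) < u := mem_Ioi.mp hu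
    have hune : u ≠ 0 := ne_of_gt hu0
    have hDu : D u ≠ 0 := (hDpos u).ne'
    have habs : |-(A / u ^ 2)| = A / u ^ 2 := by
      rw [abs_neg, abs_of_pos (by positivity)]
    have h3 : D (A / u) = A ^ 2 / u ^ 4 * D u := by
      rw [hD]; field_simp; ring
    rw [habs, smul_eq_mul, h3, mul_inv, ← mul_assoc]
    field_simp
  have haval : (∫ x in Ioi (0:ℝ), (D x)⁻¹)
      = A⁻¹ * ∫ u in Ioi (0:ℝ), u ^ 2 * (D u)⁻¹ := by
    rw [ha, setIntegral_congr_fun measurableSet_Ioi hacongr, integral_const_mul]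
  -- split the integral
  have hsplit : (∫ u in Ioi (0:ℝ), (u ^ 2 + A) * (D u)⁻¹)
      = (∫ u in Ioi (0:ℝ), u ^ 2 * (D u)⁻¹) + A * ∫ u in Ioi (0:ℝ), (D u)⁻¹ := by
    rw [← integral_const_mul, ← integral_add hint2 (hint1.const_mul A)]
    exact setIntegral_congr_fun measurableSet_Ioi fun u _ => by ring
  set I := ∫ u in Ioi (0:ℝ), (D u)⁻¹ with hI
  have hIval : I = π / (2 * σ * A) := by
    have h1 : (∫ u in Ioi (0:ℝ), u ^ 2 * (D u)⁻¹) = A * I := by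
      have := haval
      field_simp at this ⊢
      linarith
    rw [h1] at hsplit
    rw [hbval] at hsplit
    have hA' : A ≠ 0 := ne_of_gt hA
    have hσ' : σ ≠ 0 := ne_of_gt hσ
    field_simp at hsplit ⊢
    linarith
  -- even function : Iic part
  have hDeven : ∀ u : ℝ, D (-u) = D u := fun u => by rw [hD]; ring
  have hIic_val : (∫ x in Iic (0:ℝ), (D x)⁻¹) = I := by
    rw [hI, ← neg_zero, ← integral_comp_neg_Ioi, neg_zero]
    exact setIntegral_congr_fun measurableSet_Ioi fun u _ => by rw [hDeven]
  have hIio_int : IntegrableOn (fun x => (D x)⁻¹) (Iio 0) := by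
    have hnegim : (fun x : ℝ => -x) '' Ioi 0 = Iio (0:ℝ) := by
      rw [show (fun x : ℝ => -x) = Neg.neg from rfl, Set.image_neg_eq_neg, neg_Ioi, neg_zero]
    have hnd : ∀ u ∈ Ioi (0:ℝ),
        HasDerivWithinAt (fun x : ℝ => -x) (-1 : ℝ) (Ioi 0) u := fun u _ =>
      (hasDerivAt_neg u).hasDerivWithinAt
    have h := (integrableOn_image_iff_integrableOn_abs_deriv_smul measurableSet_Ioi hnd
        (neg_injective.injOn) (fun x => (D x)⁻¹)).mpr ?_
    · rwa [hnegim] at h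
    · exact MeasureTheory.IntegrableOn.congr_fun hint1
        (fun u _ => by simp [hDeven u]) measurableSet_Ioi
  have hIic_int : IntegrableOn (fun x => (D x)⁻¹) (Iic 0) := by
    rw [integrableOn_Iic_iff_integrableOn_Iio]
    exact hIio_int
  have htot := intervalIntegral.integral_Iic_add_Ioi hIic_int hint1
  have h2 : (∫ x : ℝ, (D x)⁻¹) = I + I := by
    rw [← htot, hIic_val, ← hI]
  show (∫ u : ℝ, (D u)⁻¹) = π / (σ * A)
  rw [h2, hIval]
  field_simp
  ring

theorem stmt7 (ΓP ΓS ζP ζS C : ℝ) (hΓP : 0 < ΓP) (hΓS : 0 < ΓS)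
    (hζP : ζP ∈ Set.Ioc (0:ℝ) 1) (hζS : ζS ∈ Set.Ioc (0:ℝ) 1) (hC : 0 < C) :
    ∫ ω : ℝ, 4 * C * ΓP^2 * ΓS^2 * ζP * ζS /
        ((C + 1)^2 * ΓP^2 * ΓS^2 + 4 * ω^2 * (ΓP^2 + ΓS^2 - 2 * C * ΓP * ΓS)
          + 16 * ω^4)
      = 2 * π * C * ΓP * ΓS * ζP * ζS / ((C + 1) * (ΓP + ΓS)) := by
  have hC1 : (0:ℝ) < C + 1 := by linarith
  set A := (C + 1) * ΓP * ΓS with hAdef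
  set σ' := ΓP + ΓS with hσdef
  have hApos : 0 < A := by positivity
  have hσpos : 0 < σ' := by positivity
  have key := aux_key hApos hσpos
  have hcv := MeasureTheory.Measure.integral_comp_mul_left
    (fun u : ℝ => ((u ^ 2 - A) ^ 2 + σ' ^ 2 * u ^ 2)⁻¹) 2
  rw [key] at hcv
  have hrw : ∀ ω : ℝ,
      4 * C * ΓP^2 * ΓS^2 * ζP * ζS /
        ((C + 1)^2 * ΓP^2 * ΓS^2 + 4 * ω^2 * (ΓP^2 + ΓS^2 - 2 * C * ΓP * ΓS)
          + 16 * ω^4)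
      = (4 * C * ΓP^2 * ΓS^2 * ζP * ζS) *
        (((2 * ω) ^ 2 - A) ^ 2 + σ' ^ 2 * (2 * ω) ^ 2)⁻¹ := by
    intro ω
    rw [div_eq_mul_inv]
    congr 2
    rw [hAdef, hσdef]
    ring
  simp_rw [hrw]
  rw [MeasureTheory.integral_const_mul, hcv, smul_eq_mul, hAdef, hσdef]
  rw [abs_of_pos (by norm_num : (0:ℝ) < (2:ℝ)⁻¹)]
  have h1 : ΓP + ΓS ≠ 0 := by positivity
  have h2 : C + 1 ≠ 0 := ne_of_gt hC1
  field_simp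
  ring
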